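/- If D = diag(α₁, α₂, α₃) with all αᵢ nonzero real numbers, then there exists a unit vector j ∈ ℝ³ such that the matrix M v = i (j × (D v)) has a simple eigenvalue with strictly positive real part. -/

import Mathlib

open Matrix

open Polynomial in
private lemma mem_spectrum_of_isRoot_charpoly (M : Matrix (Fin 3) (Fin 3) ℂ) (μ : ℂ)
    (h : (M.charpoly).IsRoot μ) : μ ∈ spectrum ℂ M := by
  rw [spectrum.mem_iff]
  intro hu
  rw [Matrix.isUnit_iff_isUnit_det] at hu
  have hdet : (algebraMap ℂ (Matrix (Fin 3) (Fin 3) ℂ) μ - M).det = (M.charpoly).eval μ := by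
    rw [Matrix.charpoly, ← Polynomial.coe_evalRingHom, RingHom.map_det]
    congr 1
    ext i k
    by_cases hik : i = k
    · subst hik; simp [charmatrix_apply_eq, Matrix.algebraMap_matrix_apply]
    · simp [charmatrix_apply_ne _ _ _ hik, Matrix.algebraMap_matrix_apply, hik]
  rw [hdet, h.eq_zero] at hu
  exact hu.ne_zero rfl

open Polynomial in
private lemma key_lemma (c : ℝ) (hc : 0 < c) (M : Matrix (Fin 3) (Fin 3) ℂ)
    (hch : M.charpoly = X * (X - C ((Real.sqrt c : ℝ) : ℂ)) * (X + C ((Real.sqrt c : ℝ) : ℂ))) :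
    ∃ μ : ℂ, μ ∈ spectrum ℂ M ∧ 0 < μ.re ∧
      Polynomial.rootMultiplicity μ (Matrix.charpoly M) = 1 := by
  set μ : ℂ := ((Real.sqrt c : ℝ) : ℂ) with hμdef
  have hμre : 0 < μ.re := by
    simp only [hμdef, Complex.ofReal_re]
    exact Real.sqrt_pos.mpr hc
  have hμ0 : μ ≠ 0 := fun h => by simp [h] at hμre
  refine ⟨μ, ?_, hμre, ?_⟩
  · exact mem_spectrum_of_isRoot_charpoly M μ (by rw [hch]; simp [Polynomial.IsRoot])
  · rw [hch]
    have hX : (X : ℂ[X]) ≠ 0 := X_ne_zero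
    have hX1 : (X - C μ : ℂ[X]) ≠ 0 := X_sub_C_ne_zero μ
    have hX2 : (X + C μ : ℂ[X]) ≠ 0 := by
      have := X_sub_C_ne_zero (-μ); rwa [map_neg, sub_neg_eq_add] at this
    rw [Polynomial.rootMultiplicity_mul (mul_ne_zero (mul_ne_zero hX hX1) hX2),
        Polynomial.rootMultiplicity_mul (mul_ne_zero hX hX1)]
    have h1 : Polynomial.rootMultiplicity μ (X : ℂ[X]) = 0 :=
      Polynomial.rootMultiplicity_eq_zero (by simp [Polynomial.IsRoot, hμ0])
    have h2 : Polynomial.rootMultiplicity μ (X - C μ : ℂ[X]) = 1 :=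
      Polynomial.rootMultiplicity_X_sub_C_self
    have h3 : Polynomial.rootMultiplicity μ (X + C μ : ℂ[X]) = 0 :=
      Polynomial.rootMultiplicity_eq_zero
        (by simp [Polynomial.IsRoot, add_self_eq_zero, hμ0])
    omega

open Polynomial in
private lemma charpoly_case (a b : ℝ) (hab : 0 < a * b) (M : Matrix (Fin 3) (Fin 3) ℂ)
    (hMe : M = !![0, -Complex.I * b, 0; Complex.I * a, 0, 0; 0, 0, 0]) :
    M.charpoly = X * (X - C ((Real.sqrt (a*b) : ℝ) : ℂ)) * (X + C ((Real.sqrt (a*b) : ℝ) : ℂ)) := by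
  subst hMe
  have hs : (((Real.sqrt (a*b) : ℝ) : ℂ)) * (((Real.sqrt (a*b) : ℝ) : ℂ)) = ((a:ℂ) * b) := by
    rw [← Complex.ofReal_mul, Real.mul_self_sqrt hab.le]; push_cast; ring
  rw [Matrix.charpoly, Matrix.det_fin_three]
  rw [charmatrix_apply_eq, charmatrix_apply_eq, charmatrix_apply_eq]
  rw [charmatrix_apply_ne _ _ _ (by decide), charmatrix_apply_ne _ _ _ (by decide),
      charmatrix_apply_ne _ _ _ (by decide), charmatrix_apply_ne _ _ _ (by decide),
      charmatrix_apply_ne _ _ _ (by decide), charmatrix_apply_ne _ _ _ (by decide)]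
  norm_num [Matrix.vecHead, Matrix.vecTail, Matrix.cons_val_two]
  have hI : (C Complex.I : ℂ[X]) * (C Complex.I) = -1 := by
    rw [← _root_.map_mul, Complex.I_mul_I, map_neg, Polynomial.C_1]
  have hs' : (C ((Real.sqrt (a*b) :ℝ):ℂ) : ℂ[X]) * C ((Real.sqrt (a*b):ℝ):ℂ)
      = C (a:ℂ) * C (b:ℂ) := by
    rw [← _root_.map_mul, ← _root_.map_mul, hs]
  linear_combination (X : ℂ[X]) * (C (a:ℂ) * C (b:ℂ) * hI + hs')

open Polynomial in
private lemma charpoly_case2 (a b : ℝ) (hab : 0 < a * b) (M : Matrix (Fin 3) (Fin 3) ℂ)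
    (hMe : M = !![0, 0, 0; 0, 0, -Complex.I * b; 0, Complex.I * a, 0]) :
    M.charpoly = X * (X - C ((Real.sqrt (a*b) : ℝ) : ℂ)) * (X + C ((Real.sqrt (a*b) : ℝ) : ℂ)) := by
  subst hMe
  have hs : (((Real.sqrt (a*b) : ℝ) : ℂ)) * (((Real.sqrt (a*b) : ℝ) : ℂ)) = ((a:ℂ) * b) := by
    rw [← Complex.ofReal_mul, Real.mul_self_sqrt hab.le]; push_cast; ring
  rw [Matrix.charpoly, Matrix.det_fin_three]
  rw [charmatrix_apply_eq, charmatrix_apply_eq, charmatrix_apply_eq]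
  rw [charmatrix_apply_ne _ _ _ (by decide), charmatrix_apply_ne _ _ _ (by decide),
      charmatrix_apply_ne _ _ _ (by decide), charmatrix_apply_ne _ _ _ (by decide),
      charmatrix_apply_ne _ _ _ (by decide), charmatrix_apply_ne _ _ _ (by decide)]
  norm_num [Matrix.vecHead, Matrix.vecTail, Matrix.cons_val_two]
  have hI : (C Complex.I : ℂ[X]) * (C Complex.I) = -1 := by
    rw [← _root_.map_mul, Complex.I_mul_I, map_neg, Polynomial.C_1]
  have hs' : (C ((Real.sqrt (a*b) :ℝ):ℂ) : ℂ[X]) * C ((Real.sqrt (a*b):ℝ):ℂ)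
      = C (a:ℂ) * C (b:ℂ) := by
    rw [← _root_.map_mul, ← _root_.map_mul, hs]
  linear_combination (X : ℂ[X]) * (C (a:ℂ) * C (b:ℂ) * hI + hs')

open Polynomial in
private lemma charpoly_case3 (a b : ℝ) (hab : 0 < a * b) (M : Matrix (Fin 3) (Fin 3) ℂ)
    (hMe : M = !![0, 0, Complex.I * b; 0, 0, 0; -Complex.I * a, 0, 0]) :
    M.charpoly = X * (X - C ((Real.sqrt (a*b) : ℝ) : ℂ)) * (X + C ((Real.sqrt (a*b) : ℝ) : ℂ)) := by
  subst hMe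
  have hs : (((Real.sqrt (a*b) : ℝ) : ℂ)) * (((Real.sqrt (a*b) : ℝ) : ℂ)) = ((a:ℂ) * b) := by
    rw [← Complex.ofReal_mul, Real.mul_self_sqrt hab.le]; push_cast; ring
  rw [Matrix.charpoly, Matrix.det_fin_three]
  rw [charmatrix_apply_eq, charmatrix_apply_eq, charmatrix_apply_eq]
  rw [charmatrix_apply_ne _ _ _ (by decide), charmatrix_apply_ne _ _ _ (by decide),
      charmatrix_apply_ne _ _ _ (by decide), charmatrix_apply_ne _ _ _ (by decide),
      charmatrix_apply_ne _ _ _ (by decide), charmatrix_apply_ne _ _ _ (by decide)]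
  norm_num [Matrix.vecHead, Matrix.vecTail, Matrix.cons_val_two]
  have hI : (C Complex.I : ℂ[X]) * (C Complex.I) = -1 := by
    rw [← _root_.map_mul, Complex.I_mul_I, map_neg, Polynomial.C_1]
  have hs' : (C ((Real.sqrt (a*b) :ℝ):ℂ) : ℂ[X]) * C ((Real.sqrt (a*b):ℝ):ℂ)
      = C (a:ℂ) * C (b:ℂ) := by
    rw [← _root_.map_mul, ← _root_.map_mul, hs]
  linear_combination (X : ℂ[X]) * (C (a:ℂ) * C (b:ℂ) * hI + hs')


set_option maxHeartbeats 1000000 in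
theorem exists_unit_j_simple_unstable_eigenvalue (α₁ α₂ α₃ : ℝ)
    (h₁ : α₁ ≠ 0) (h₂ : α₂ ≠ 0) (h₃ : α₃ ≠ 0) :
    ∃ j : Fin 3 → ℝ, j 0 ^ 2 + j 1 ^ 2 + j 2 ^ 2 = 1 ∧
      ∀ M : Matrix (Fin 3) (Fin 3) ℂ,
        (∀ v : Fin 3 → ℂ, M.mulVec v =
          Complex.I • crossProduct (fun k => ((j k : ℝ) : ℂ))
            ((Matrix.diagonal ![(α₁ : ℂ), (α₂ : ℂ), (α₃ : ℂ)]).mulVec v)) →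
        ∃ μ : ℂ, μ ∈ spectrum ℂ M ∧ 0 < μ.re ∧
          Polynomial.rootMultiplicity μ (Matrix.charpoly M) = 1 := by
  by_cases h12 : 0 < α₁ * α₂
  · refine ⟨![0, 0, 1], by norm_num [Matrix.cons_val_two], fun M hM => ?_⟩
    apply key_lemma (α₁ * α₂) h12
    apply charpoly_case α₁ α₂ h12
    ext i k
    have h := congrFun (hM (Pi.single k 1)) i
    rw [Matrix.mulVec_single] at h
    fin_cases i <;> fin_cases k <;>
      simp [Matrix.diagonal_mulVec_single, crossProduct, Pi.single_apply] at h ⊢ <;>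
      simp [h, Matrix.vecHead, Matrix.vecTail] <;> ring
  · by_cases h23 : 0 < α₂ * α₃
    · refine ⟨![1, 0, 0], by norm_num [Matrix.cons_val_two], fun M hM => ?_⟩
      apply key_lemma (α₂ * α₃) h23
      apply charpoly_case2 α₂ α₃ h23
      ext i k
      have h := congrFun (hM (Pi.single k 1)) i
      rw [Matrix.mulVec_single] at h
      fin_cases i <;> fin_cases k <;>
        simp [Matrix.diagonal_mulVec_single, crossProduct, Pi.single_apply] at h ⊢ <;>
        simp [h, Matrix.vecHead, Matrix.vecTail] <;> ring
    · have h13 : 0 < α₁ * α₃ := by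
        rcases (mul_ne_zero h₁ h₂).lt_or_gt with h | h
        · rcases (mul_ne_zero h₂ h₃).lt_or_gt with h' | h'
          · nlinarith [sq_nonneg α₂, mul_pos_of_neg_of_neg h h', sq_pos_of_ne_zero h₂]
          · exact absurd h' (by simpa using h23)
        · exact absurd h (by simpa using h12)
      refine ⟨![0, 1, 0], by norm_num [Matrix.cons_val_two], fun M hM => ?_⟩
      apply key_lemma (α₁ * α₃) h13
      apply charpoly_case3 α₁ α₃ h13
      ext i k
      have h := congrFun (hM (Pi.single k 1)) i
      rw [Matrix.mulVec_single] at h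
      fin_cases i <;> fin_cases k <;>
        simp [Matrix.diagonal_mulVec_single, crossProduct, Pi.single_apply] at h ⊢ <;>
        simp [h, Matrix.vecHead, Matrix.vecTail] <;> ring
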